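/- (Photon-efficiency cap for single-symbol BPSK detection.) Let h(x) = -x ln x - (1-x) ln(1-x) (binary entropy in nats, 0 ln 0 = 0), and let C₁(E) = ln 2 - h( (1 - √(1 - e^{-4E}))/2 ) be the Shannon capacity in nats per symbol of the binary symmetric channel induced by the minimum-error single-symbol measurement (Dolinar receiver) on BPSK coherent states with mean photon number E. Then lim_{E → 0⁺} C₁(E)/E = 2, i.e. the photon efficiency of BPSK with optimal symbol-by-symbol detection caps off at 2 nats per photon as E → 0⁺. -/

import Mathlib

open Filter Topology Real Set

/-- Algebraic identity: for `s ∈ (0,1)`,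
`log 2 - binEntropy ((1-s)/2) = ((1+s) log(1+s) + (1-s) log(1-s)) / 2`. -/
lemma binEntropy_identity {s : ℝ} (h0 : 0 < s) (h1 : s < 1) :
    Real.log 2 - Real.binEntropy ((1 - s) / 2)
      = ((1 + s) * Real.log (1 + s) + (1 - s) * Real.log (1 - s)) / 2 := by
  have hs1 : (0:ℝ) < 1 - s := by linarith
  have hs2 : (0:ℝ) < 1 + s := by linarith
  rw [Real.binEntropy, Real.log_inv, Real.log_inv]
  have e1 : (1 : ℝ) - (1 - s) / 2 = (1 + s) / 2 := by ring
  rw [e1, Real.log_div hs1.ne' (by norm_num), Real.log_div hs2.ne' (by norm_num)]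
  ring

lemma slope_log_sub_log :
    Tendsto (fun s : ℝ => (Real.log (1 + s) - Real.log (1 - s)) / (4 * s))
      (𝓝[>] 0) (𝓝 (1/2)) := by
  have h1 : HasDerivAt (fun s : ℝ => Real.log (1 + s)) 1 0 := by
    have := ((hasDerivAt_id (0:ℝ)).const_add 1).log (by norm_num)
    simpa using this
  have h2 : HasDerivAt (fun s : ℝ => Real.log (1 - s)) (-1) 0 := by
    have := ((hasDerivAt_id (0:ℝ)).const_sub 1).log (by norm_num)
    simpa using this
  have hg : HasDerivAt (fun s : ℝ => Real.log (1 + s) - Real.log (1 - s)) 2 0 := by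
    have := h1.sub h2
    norm_num at this
    exact this
  have hslope := hasDerivAt_iff_tendsto_slope.mp hg
  have hslope' : Tendsto (slope (fun s : ℝ => Real.log (1 + s) - Real.log (1 - s)) 0)
      (𝓝[>] 0) (𝓝 2) :=
    hslope.mono_left (nhdsWithin_mono _ (fun x hx => by
      simpa using ne_of_gt (show (0:ℝ) < x from hx)))
  have := hslope'.div_const 4
  have heq : (fun s : ℝ => slope (fun s : ℝ => Real.log (1 + s) - Real.log (1 - s)) 0 s / 4)
      = fun s : ℝ => (Real.log (1 + s) - Real.log (1 - s)) / (4 * s) := by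
    funext s
    simp only [slope_def_field, div_sub_div_same, sub_zero]
    rw [div_div]
    ring_nf
  rw [heq] at this
  convert this using 2
  norm_num

lemma F_over_sq :
    Tendsto (fun s : ℝ =>
        ((1 + s) * Real.log (1 + s) + (1 - s) * Real.log (1 - s)) / (2 * s ^ 2))
      (𝓝[>] 0) (𝓝 (1/2)) := by
  have key := HasDerivAt.lhopital_zero_right_on_Ioo (a := (0:ℝ)) (b := 1/2) (by norm_num)
    (f := fun s => (1 + s) * Real.log (1 + s) + (1 - s) * Real.log (1 - s))
    (f' := fun s => Real.log (1 + s) - Real.log (1 - s))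
    (g := fun s => 2 * s ^ 2) (g' := fun s => 4 * s) (l := 𝓝 (1/2))
    ?_ ?_ ?_ ?_ ?_ slope_log_sub_log
  · exact key
  · intro x hx
    obtain ⟨hx0, hx1⟩ := hx
    have hp1 : (0:ℝ) < 1 + x := by linarith
    have hp2 : (0:ℝ) < 1 - x := by linarith
    have d1 : HasDerivAt (fun s : ℝ => (1 + s) * Real.log (1 + s))
        (1 * Real.log (1 + x) + (1 + x) * ((1:ℝ) / (1 + x))) x := by
      have ha : HasDerivAt (fun s : ℝ => 1 + s) 1 x := by
        simpa using (hasDerivAt_id x).const_add 1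
      exact ha.mul (by simpa using ha.log hp1.ne')
    have d2 : HasDerivAt (fun s : ℝ => (1 - s) * Real.log (1 - s))
        ((-1) * Real.log (1 - x) + (1 - x) * ((-1:ℝ) / (1 - x))) x := by
      have ha : HasDerivAt (fun s : ℝ => 1 - s) (-1) x := by
        simpa using (hasDerivAt_id x).const_sub 1
      exact ha.mul (by simpa using ha.log hp2.ne')
    have := d1.add d2
    refine this.congr_deriv ?_
    rw [mul_one_div_cancel hp1.ne', mul_div_cancel₀ _ hp2.ne']
    beta_reduce
    ring
  · intro x hx
    have : HasDerivAt (fun s : ℝ => s ^ 2) (2 * x) x := by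
      simpa using hasDerivAt_pow 2 x
    have h2 : HasDerivAt (fun s : ℝ => 2 * s ^ 2) (2 * (2 * x)) x := this.const_mul 2
    convert h2 using 1
    ring
  · intro x hx
    have hx0 : (0:ℝ) < x := hx.1
    positivity
  · have hc : ContinuousAt (fun s : ℝ =>
        (1 + s) * Real.log (1 + s) + (1 - s) * Real.log (1 - s)) 0 := by
      have c1 : ContinuousAt (fun s : ℝ => Real.log (1 + s)) 0 :=
        (Real.continuousAt_log (by norm_num)).comp (by fun_prop)
      have c2 : ContinuousAt (fun s : ℝ => Real.log (1 - s)) 0 :=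
        (Real.continuousAt_log (by norm_num)).comp (by fun_prop)
      exact ((continuousAt_const.add continuousAt_id).mul c1).add
        ((continuousAt_const.sub continuousAt_id).mul c2)
    have h := hc.tendsto.mono_left (nhdsWithin_le_nhds (s := Set.Ioi (0:ℝ)))
    simpa using h
  · have : Tendsto (fun s : ℝ => 2 * s ^ 2) (𝓝 0) (𝓝 (2 * 0 ^ 2)) :=
      (continuous_const.mul (continuous_pow 2)).tendsto 0
    simpa using this.mono_left nhdsWithin_le_nhds

lemma exp_slope :
    Tendsto (fun E : ℝ => (1 - Real.exp (-(4 * E))) / E) (𝓝[>] 0) (𝓝 4) := by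
  have hd : HasDerivAt (fun E : ℝ => 1 - Real.exp (-(4 * E))) 4 0 := by
    have h1 : HasDerivAt (fun E : ℝ => -(4 * E)) (-4) 0 := by
      simpa [Pi.neg_def] using ((hasDerivAt_id (0:ℝ)).const_mul 4).neg
    have h2 := h1.exp
    have := h2.const_sub 1
    norm_num at this
    exact this
  have hslope := hasDerivAt_iff_tendsto_slope.mp hd
  have hslope' := hslope.mono_left (nhdsWithin_mono _ (fun x hx => by
    simpa using ne_of_gt (show (0:ℝ) < x from hx)))
  have heq : ∀ E : ℝ, slope (fun E : ℝ => 1 - Real.exp (-(4 * E))) 0 E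
      = (1 - Real.exp (-(4 * E))) / E := by
    intro E
    simp [slope_def_field]
  refine hslope'.congr (fun E => (heq E))

theorem bpsk_single_symbol_photon_efficiency_cap :
    Tendsto
      (fun E : ℝ =>
        (Real.log 2
          - Real.binEntropy ((1 - Real.sqrt (1 - Real.exp (-(4 * E)))) / 2)) / E)
      (𝓝[>] 0) (𝓝 2) := by
  set s : ℝ → ℝ := fun E => Real.sqrt (1 - Real.exp (-(4 * E))) with hs
  have hsIn : ∀ E : ℝ, 0 < E → 0 < 1 - Real.exp (-(4 * E)) ∧ 1 - Real.exp (-(4 * E)) < 1 := by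
    intro E hE
    constructor
    · have : Real.exp (-(4 * E)) < 1 := Real.exp_lt_one_iff.mpr (by linarith)
      linarith
    · have : 0 < Real.exp (-(4 * E)) := Real.exp_pos _
      linarith
  have hsTend : Tendsto s (𝓝[>] 0) (𝓝[>] 0) := by
    apply tendsto_nhdsWithin_of_tendsto_nhds_of_eventually_within
    · have : ContinuousAt s 0 := by
        apply Real.continuous_sqrt.continuousAt.comp
        fun_prop
      have h0 : s 0 = 0 := by simp [hs]
      simpa [h0] using this.tendsto.mono_left nhdsWithin_le_nhds
    · filter_upwards [self_mem_nhdsWithin] with E hE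
      exact Real.sqrt_pos.mpr (hsIn E hE).1
  have hcomp : Tendsto (fun E : ℝ =>
      ((1 + s E) * Real.log (1 + s E) + (1 - s E) * Real.log (1 - s E)) / (2 * (s E) ^ 2))
      (𝓝[>] 0) (𝓝 (1/2)) := F_over_sq.comp hsTend
  have hprod := hcomp.mul exp_slope
  have h2 : (1/2 : ℝ) * 4 = 2 := by norm_num
  rw [h2] at hprod
  refine hprod.congr' ?_
  filter_upwards [self_mem_nhdsWithin] with E hE
  obtain ⟨ha, hb⟩ := hsIn E hE
  have hs0 : 0 < s E := Real.sqrt_pos.mpr ha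
  have hs1 : s E < 1 := by
    rw [hs]
    rw [Real.sqrt_lt' (by norm_num : (0:ℝ) < 1)]
    simpa using hb
  have hsq : (s E) ^ 2 = 1 - Real.exp (-(4 * E)) := Real.sq_sqrt (le_of_lt ha)
  rw [binEntropy_identity hs0 hs1]
  rw [← hsq]
  have hE0 : E ≠ 0 := ne_of_gt hE
  have hsne : (s E) ^ 2 ≠ 0 := by positivity
  field_simp
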